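/- arXiv:1410.5300 — 5 statements merged into one kernel-verified Lean document; each statement's English description precedes it below -/
import Mathlib

section
/- For all integers n ≥ 0 and k ≥ 1, every sequence of real numbers ᾱ = (α₀, α₁, …, α_{n−1}) and all nonzero real numbers ℓ₁, …, ℓ_k, the multiparameter poly-Cauchy numbers of the first kind satisfy C_{n,L}^{(k)}(ᾱ) = Σ_{j=0}^{n} Σ_{m=j}^{n} S(n,m;ᾱ) s(m,j) (ℓ₁ℓ₂⋯ℓ_k)^{j+1} / (j+1)^k. -/
open Finset

/-- Iterated integral ∫₀^{ℓ₁}⋯∫₀^{ℓ_k} f(x₁x₂⋯x_k) dx₁⋯dx_k over the list of bounds. -/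
noncomputable def iterInt : List ℝ → (ℝ → ℝ) → ℝ
  | [], f => f 1
  | l :: ls, f => ∫ x in (0:ℝ)..l, iterInt ls (fun y => f (x * y))

/-- Falling factorial (x)_m = x(x-1)⋯(x-m+1) of a real number. -/
noncomputable def ffall (x : ℝ) (m : ℕ) : ℝ := ∏ i ∈ Finset.range m, (x - (i : ℝ))

lemma iterInt_poly (N : ℕ) : ∀ (ls : List ℝ) (c : ℕ → ℝ),
    iterInt ls (fun t => ∑ j ∈ range N, c j * t ^ j) =
      ∑ j ∈ range N, c j * ls.prod ^ (j + 1) / ((j : ℝ) + 1) ^ ls.length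
  | [], c => by simp [iterInt]
  | l :: ls, c => by
    have h1 : ∀ x : ℝ, (fun y => ∑ j ∈ range N, c j * (x * y) ^ j) =
        (fun t => ∑ j ∈ range N, (c j * x ^ j) * t ^ j) := by
      intro x; funext y; apply Finset.sum_congr rfl; intro j _; ring
    show (∫ x in (0:ℝ)..l, iterInt ls (fun y => ∑ j ∈ range N, c j * (x * y) ^ j)) = _
    have h2 : (∫ x in (0:ℝ)..l, iterInt ls (fun y => ∑ j ∈ range N, c j * (x * y) ^ j))
        = ∫ x in (0:ℝ)..l, ∑ j ∈ range N,
            (c j * x ^ j) * ls.prod ^ (j + 1) / ((j : ℝ) + 1) ^ ls.length := by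
      congr 1; funext x; rw [h1 x, iterInt_poly N ls (fun j => c j * x ^ j)]
    rw [h2, intervalIntegral.integral_finset_sum]
    · apply Finset.sum_congr rfl
      intro j _
      have : (∫ x in (0:ℝ)..l, (c j * x ^ j) * ls.prod ^ (j + 1) / ((j : ℝ) + 1) ^ ls.length)
          = (c j * ls.prod ^ (j + 1) / ((j : ℝ) + 1) ^ ls.length) * ∫ x in (0:ℝ)..l, x ^ j := by
        rw [← intervalIntegral.integral_const_mul]
        congr 1; funext x; ring
      rw [this, integral_pow]
      have hj : ((j : ℝ) + 1) ≠ 0 := by positivity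
      simp only [List.prod_cons, List.length_cons]
      field_simp
      ring
    · intro j _
      apply Continuous.intervalIntegrable
      continuity

theorem stmt2 (n k : ℕ) (hk : 1 ≤ k) (α : ℕ → ℝ) (L : Fin k → ℝ)
    (hL : ∀ i, L i ≠ 0) (S : ℕ → ℝ) (st : ℕ → ℕ → ℝ)
    (hS : ∀ x : ℝ, ∏ i ∈ range n, (x - α i) = ∑ m ∈ range (n + 1), S m * ffall x m)
    (hst : ∀ m ≤ n, ∀ x : ℝ, ffall x m = ∑ j ∈ range (m + 1), st m j * x ^ j) :
    iterInt (List.ofFn L) (fun t => ∏ i ∈ range n, (t - α i)) =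
      ∑ j ∈ range (n + 1), ∑ m ∈ Icc j n,
        S m * st m j * (∏ i, L i) ^ (j + 1) / ((j : ℝ) + 1) ^ k := by
  have key : ∀ t : ℝ, (∏ i ∈ range n, (t - α i)) =
      ∑ j ∈ range (n + 1), (∑ m ∈ Icc j n, S m * st m j) * t ^ j := by
    intro t
    rw [hS t]
    have : ∀ m ∈ range (n + 1), S m * ffall t m
        = ∑ j ∈ range (m + 1), S m * st m j * t ^ j := by
      intro m hm
      rw [hst m (by simpa using Nat.lt_succ_iff.mp (mem_range.mp hm)) t, Finset.mul_sum]
      apply Finset.sum_congr rfl; intro j _; ring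
    rw [Finset.sum_congr rfl this]
    rw [Finset.sum_sigma']
    rw [Finset.sum_congr rfl (fun j _ => Finset.sum_mul ..)]
    rw [Finset.sum_sigma']
    apply Finset.sum_nbij' (fun p => ⟨p.2, p.1⟩) (fun p => ⟨p.2, p.1⟩) <;>
      simp +contextual [Nat.lt_succ_iff] <;> omega
  have hfun : (fun t => ∏ i ∈ range n, (t - α i)) =
      (fun t => ∑ j ∈ range (n + 1), (∑ m ∈ Icc j n, S m * st m j) * t ^ j) := funext key
  rw [hfun, iterInt_poly]
  simp only [List.prod_ofFn, List.length_ofFn]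
  apply Finset.sum_congr rfl
  intro j _
  rw [Finset.sum_mul, Finset.sum_div]
end

section
/- For all integers n ≥ 0 and k ≥ 1, every sequence of real numbers ᾱ = (α₀, α₁, …, α_{n−1}) and all nonzero real numbers ℓ₁, …, ℓ_k, the multiparameter poly-Bernoulli numbers are expressed through the multiparameter poly-Cauchy numbers of the second kind by B_{n,ᾱ,L}^{(k)} = Σ_{j=0}^{n} Σ_{m=j}^{n} (−1)^n m! S_ᾱ(n,m) S_ᾱ(m,j) Ĉ_{j,L}^{(k)}(ᾱ). -/
open Finset

lemma iterInt_sum (ls : List ℝ) (N : ℕ) (c : ℕ → ℝ) :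
    iterInt ls (fun t => ∑ j ∈ range N, c j * t ^ j)
      = ∑ j ∈ range N, c j * ls.prod ^ (j + 1) / ((j : ℝ) + 1) ^ ls.length := by
  induction ls generalizing c with
  | nil => simp [iterInt]
  | cons l ls ih =>
    show (∫ x in (0:ℝ)..l, iterInt ls (fun y => ∑ j ∈ range N, c j * (x * y) ^ j)) = _
    have h1 : ∀ x : ℝ, iterInt ls (fun y => ∑ j ∈ range N, c j * (x * y) ^ j)
        = ∑ j ∈ range N, (c j * ls.prod ^ (j + 1) / ((j : ℝ) + 1) ^ ls.length) * x ^ j := by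
      intro x
      have h2 : (fun y => ∑ j ∈ range N, c j * (x * y) ^ j)
          = fun y => ∑ j ∈ range N, (c j * x ^ j) * y ^ j := by
        funext y
        exact Finset.sum_congr rfl (fun j _ => by ring)
      rw [h2, ih]
      exact Finset.sum_congr rfl (fun j _ => by ring)
    simp only [h1]
    rw [intervalIntegral.integral_finset_sum (fun j _ => by
      apply Continuous.intervalIntegrable; continuity)]
    refine Finset.sum_congr rfl (fun j _ => ?_)
    rw [intervalIntegral.integral_const_mul, integral_pow]
    have hj : ((j : ℝ) + 1) ≠ 0 := by positivity
    simp only [List.prod_cons, List.length_cons]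
    field_simp
    ring

lemma iterInt_eval (ls : List ℝ) (P : Polynomial ℝ) (N : ℕ) (hN : P.natDegree < N) :
    iterInt ls (fun t => P.eval t)
      = ∑ j ∈ range N, P.coeff j * ls.prod ^ (j + 1) / ((j : ℝ) + 1) ^ ls.length := by
  rw [← iterInt_sum]
  congr 1
  funext t
  exact P.eval_eq_sum_range' hN t

theorem stmt11 (n k : ℕ) (hk : 1 ≤ k) (α : ℕ → ℝ) (L : Fin k → ℝ)
    (hL : ∀ i, L i ≠ 0) (S : ℕ → ℕ → ℝ)
    (hS : ∀ p ≤ n, ∀ x : ℝ,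
      x ^ p = ∑ m ∈ range (p + 1), S p m * ∏ i ∈ range m, (x - α i)) :
    ∑ m ∈ range (n + 1),
        (-1 : ℝ) ^ (n - m) * (m.factorial : ℝ) * S n m *
          (∏ i, L i) ^ (m + 1) / ((m : ℝ) + 1) ^ k =
      ∑ j ∈ range (n + 1), ∑ m ∈ Icc j n,
        (-1 : ℝ) ^ n * (m.factorial : ℝ) * S n m * S m j *
          iterInt (List.ofFn L) (fun t => ∏ i ∈ range j, (-t - α i)) := by
  classical
  set ls := List.ofFn L with hls
  have hlen : ls.length = k := by simp [hls]
  have hprod : ls.prod = ∏ i, L i := by rw [hls, List.prod_ofFn]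
  -- the polynomials
  set Q : ℕ → Polynomial ℝ := fun j => ∏ i ∈ range j, (-Polynomial.X - Polynomial.C (α i))
    with hQ
  have hQeval : ∀ j (t : ℝ), (Q j).eval t = ∏ i ∈ range j, (-t - α i) := by
    intro j t
    simp [hQ, Polynomial.eval_prod]
  have hQdeg : ∀ j, (Q j).natDegree ≤ j := by
    intro j
    have h := Polynomial.natDegree_prod_le (range j)
      (fun i => -Polynomial.X - Polynomial.C (α i))
    have h2 : ∀ i : ℕ, (-Polynomial.X - Polynomial.C (α i)).natDegree = 1 := by
      intro i
      have he : (-Polynomial.X - Polynomial.C (α i))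
          = -(Polynomial.X + Polynomial.C (α i)) := by ring
      rw [he, Polynomial.natDegree_neg, Polynomial.natDegree_X_add_C]
    calc (Q j).natDegree ≤ ∑ i ∈ range j, (-Polynomial.X - Polynomial.C (α i)).natDegree := h
      _ = j := by simp [h2]
  -- key computation for each m ≤ n
  have key : ∀ m ≤ n,
      ∑ j ∈ range (m + 1), S m j * iterInt ls (fun t => ∏ i ∈ range j, (-t - α i))
        = (-1 : ℝ) ^ m * ls.prod ^ (m + 1) / ((m : ℝ) + 1) ^ k := by
    intro m hm
    -- polynomial identity : ∑ j, C (S m j) * Q j = C ((-1)^m) * X^m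
    have hpoly : (∑ j ∈ range (m + 1), Polynomial.C (S m j) * Q j)
        = Polynomial.C ((-1 : ℝ) ^ m) * Polynomial.X ^ m := by
      apply Polynomial.funext
      intro t
      have := hS m hm (-t)
      simp only [Polynomial.eval_finset_sum, Polynomial.eval_mul, Polynomial.eval_C,
        Polynomial.eval_pow, Polynomial.eval_X, hQeval]
      calc ∑ j ∈ range (m + 1), S m j * ∏ i ∈ range j, (-t - α i)
          = (-t) ^ m := by rw [← this]
        _ = (-1 : ℝ) ^ m * t ^ m := by rw [neg_pow]
    have hcoeff : ∀ r, (∑ j ∈ range (m + 1), S m j * (Q j).coeff r)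
        = if r = m then (-1 : ℝ) ^ m else 0 := by
      intro r
      have h1 : (∑ j ∈ range (m + 1), Polynomial.C (S m j) * Q j).coeff r
          = ∑ j ∈ range (m + 1), S m j * (Q j).coeff r := by
        rw [Polynomial.finset_sum_coeff]
        exact Finset.sum_congr rfl (fun j _ => by rw [Polynomial.coeff_C_mul])
      rw [← h1, hpoly, Polynomial.coeff_C_mul, Polynomial.coeff_X_pow]
      by_cases h : r = m <;> simp [h]
    have hIval : ∀ j ∈ range (m + 1),
        iterInt ls (fun t => ∏ i ∈ range j, (-t - α i))
          = ∑ r ∈ range (m + 1), (Q j).coeff r * ls.prod ^ (r + 1) / ((r : ℝ) + 1) ^ k := by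
      intro j hj
      have hjm : j ≤ m := by simpa [Nat.lt_succ_iff] using hj
      have hdeg : (Q j).natDegree < m + 1 := lt_of_le_of_lt (le_trans (hQdeg j) hjm)
        (Nat.lt_succ_self m)
      have := iterInt_eval ls (Q j) (m + 1) hdeg
      rw [hlen] at this
      rw [← this]
      congr 1
      funext t
      rw [hQeval]
    calc ∑ j ∈ range (m + 1), S m j * iterInt ls (fun t => ∏ i ∈ range j, (-t - α i))
        = ∑ j ∈ range (m + 1), S m j *
            ∑ r ∈ range (m + 1), (Q j).coeff r * ls.prod ^ (r + 1) / ((r : ℝ) + 1) ^ k := by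
          exact Finset.sum_congr rfl (fun j hj => by rw [hIval j hj])
      _ = ∑ r ∈ range (m + 1), (∑ j ∈ range (m + 1), S m j * (Q j).coeff r) *
            (ls.prod ^ (r + 1) / ((r : ℝ) + 1) ^ k) := by
          simp only [Finset.mul_sum]
          rw [Finset.sum_comm]
          refine Finset.sum_congr rfl (fun r _ => ?_)
          rw [Finset.sum_mul]
          exact Finset.sum_congr rfl (fun j _ => by ring)
      _ = ∑ r ∈ range (m + 1), (if r = m then (-1 : ℝ) ^ m else 0) *
            (ls.prod ^ (r + 1) / ((r : ℝ) + 1) ^ k) := by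
          exact Finset.sum_congr rfl (fun r _ => by rw [hcoeff])
      _ = (-1 : ℝ) ^ m * ls.prod ^ (m + 1) / ((m : ℝ) + 1) ^ k := by
          rw [Finset.sum_eq_single m]
          · simp [mul_div_assoc]
          · intro b _ hb; simp [hb]
          · intro h; exact absurd (Finset.self_mem_range_succ m) h
  -- swap the double sum on the RHS
  have hswap : (∑ j ∈ range (n + 1), ∑ m ∈ Icc j n,
        (-1 : ℝ) ^ n * (m.factorial : ℝ) * S n m * S m j *
          iterInt ls (fun t => ∏ i ∈ range j, (-t - α i)))
      = ∑ m ∈ range (n + 1), ∑ j ∈ range (m + 1),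
        (-1 : ℝ) ^ n * (m.factorial : ℝ) * S n m * S m j *
          iterInt ls (fun t => ∏ i ∈ range j, (-t - α i)) := by
    have h1 : ∀ j : ℕ, Icc j n = Finset.Ico j (n + 1) := fun j => by
      rw [Finset.Ico_add_one_right_eq_Icc]
    have h2 : range (n + 1) = Finset.Ico 0 (n + 1) := by rw [Nat.Ico_zero_eq_range]
    simp only [h1, h2]
    rw [Finset.sum_Ico_Ico_comm]
    refine Finset.sum_congr rfl (fun m _ => ?_)
    rw [Nat.Ico_zero_eq_range]
  rw [hswap]
  refine Finset.sum_congr rfl (fun m hm => ?_)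
  have hmn : m ≤ n := by simpa [Nat.lt_succ_iff] using hm
  have h3 : (∑ j ∈ range (m + 1),
      (-1 : ℝ) ^ n * (m.factorial : ℝ) * S n m * S m j *
        iterInt ls (fun t => ∏ i ∈ range j, (-t - α i)))
      = (-1 : ℝ) ^ n * (m.factorial : ℝ) * S n m *
        ∑ j ∈ range (m + 1), S m j * iterInt ls (fun t => ∏ i ∈ range j, (-t - α i)) := by
    rw [Finset.mul_sum]
    exact Finset.sum_congr rfl (fun j _ => by ring)
  rw [h3, key m hmn, hprod]
  have hsign : (-1 : ℝ) ^ (n - m) = (-1 : ℝ) ^ n * (-1 : ℝ) ^ m := by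
    have : (-1 : ℝ) ^ (n - m) * (-1 : ℝ) ^ m = (-1 : ℝ) ^ n := by
      rw [← pow_add, Nat.sub_add_cancel hmn]
    have hm2 : ((-1 : ℝ) ^ m) * ((-1 : ℝ) ^ m) = 1 := by
      rw [← pow_add, ← two_mul, pow_mul]; norm_num
    calc (-1 : ℝ) ^ (n - m) = (-1 : ℝ) ^ (n - m) * (((-1 : ℝ) ^ m) * ((-1 : ℝ) ^ m)) := by
          rw [hm2, mul_one]
      _ = (-1 : ℝ) ^ n * (-1 : ℝ) ^ m := by rw [← mul_assoc, this]
  rw [hsign]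
  ring
end

section
/- For all integers n ≥ 0 and k ≥ 1, every sequence of real numbers ᾱ = (α₀, α₁, …, α_{n−1}) and all nonzero real numbers ℓ₁, …, ℓ_k, the multiparameter poly-Cauchy numbers of the first kind are expressed through the multiparameter poly-Bernoulli numbers by C_{n,L}^{(k)}(ᾱ) = Σ_{j=0}^{n} Σ_{m=j}^{n} (−1)^{m−j} (s_ᾱ(m,j) s_ᾱ(n,m) / m!) B_{j,ᾱ,L}^{(k)}. -/
open Finset

lemma iterInt_polysum (M : ℕ) :
    ∀ (ls : List ℝ) (c : ℕ → ℝ),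
      iterInt ls (fun t => ∑ m ∈ range M, c m * t ^ m) =
        ∑ m ∈ range M, c m * ls.prod ^ (m + 1) / ((m : ℝ) + 1) ^ ls.length
  | [], c => by simp [iterInt]
  | l :: ls, c => by
    show (∫ x in (0:ℝ)..l,
        iterInt ls (fun y => ∑ m ∈ range M, c m * (x * y) ^ m)) = _
    have h1 : ∀ x : ℝ, (fun y => ∑ m ∈ range M, c m * (x * y) ^ m)
        = (fun y => ∑ m ∈ range M, (c m * x ^ m) * y ^ m) := by
      intro x; funext y; exact Finset.sum_congr rfl (fun m _ => by ring)
    have h2 : ∀ x : ℝ, iterInt ls (fun y => ∑ m ∈ range M, c m * (x * y) ^ m)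
        = ∑ m ∈ range M, (c m * x ^ m) * ls.prod ^ (m+1) / ((m:ℝ)+1) ^ ls.length := by
      intro x; rw [h1 x]; exact iterInt_polysum M ls _
    rw [intervalIntegral.integral_congr (g := fun x =>
        ∑ m ∈ range M, (c m * x ^ m) * ls.prod ^ (m+1) / ((m:ℝ)+1) ^ ls.length)
        (fun x _ => h2 x)]
    rw [intervalIntegral.integral_finset_sum (fun m _ => by
      apply Continuous.intervalIntegrable; fun_prop)]
    refine Finset.sum_congr rfl (fun m _ => ?_)
    have : (fun x : ℝ => c m * x ^ m * ls.prod ^ (m+1) / ((m:ℝ)+1) ^ ls.length)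
        = fun x : ℝ => (c m * ls.prod ^ (m+1) / ((m:ℝ)+1) ^ ls.length) * x ^ m := by
      funext x; ring
    rw [this, intervalIntegral.integral_const_mul, integral_pow]
    have hm : ((m:ℝ)+1) ≠ 0 := by positivity
    simp only [List.prod_cons, List.length_cons, mul_pow, pow_succ]
    field_simp
    ring

open Polynomial in
lemma swap_sum {β : Type*} [AddCommMonoid β] (N : ℕ) (f : ℕ → ℕ → β) :
    ∑ j ∈ range (N + 1), ∑ q ∈ range (j + 1), f j q
      = ∑ q ∈ range (N + 1), ∑ j ∈ Icc q N, f j q := by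
  refine Finset.sum_comm' ?_
  intro j q
  simp only [mem_range, mem_Icc]
  omega

open Polynomial in
lemma indep (α : ℕ → ℝ) (d : ℕ → ℝ) :
    ∀ M : ℕ,
      (∑ q ∈ range M, Polynomial.C (d q) * ∏ i ∈ range q, (X - Polynomial.C (α i)) = 0) →
      ∀ q < M, d q = 0 := by
  intro M
  induction M with
  | zero => intro _ q hq; omega
  | succ N ih =>
    intro h q hq
    have hmon : ∀ q : ℕ, (∏ i ∈ range q, (X - Polynomial.C (α i))).Monic :=
      fun q => monic_prod_of_monic _ _ (fun i _ => monic_X_sub_C _)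
    have hdeg : ∀ q : ℕ, (∏ i ∈ range q, (X - Polynomial.C (α i))).natDegree = q := by
      intro q
      rw [natDegree_prod_of_monic _ _ (fun i _ => monic_X_sub_C _)]
      simp
    have hdN : d N = 0 := by
      have := congrArg (fun p => Polynomial.coeff p N) h
      simp only [finset_sum_coeff, coeff_C_mul, coeff_zero] at this
      rw [Finset.sum_range_succ] at this
      have hlead : (∏ i ∈ range N, (X - Polynomial.C (α i))).coeff N = 1 := by
        have := (hmon N).leadingCoeff
        rwa [Polynomial.leadingCoeff, hdeg N] at this
      have hz : ∀ q ∈ range N, d q * (∏ i ∈ range q, (X - Polynomial.C (α i))).coeff N = 0 := by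
        intro q hq
        rw [Polynomial.coeff_eq_zero_of_natDegree_lt (by rw [hdeg]; exact mem_range.mp hq),
          mul_zero]
      rw [Finset.sum_eq_zero hz, hlead, zero_add, mul_one] at this
      exact this
    rcases Nat.lt_succ_iff_lt_or_eq.mp hq with h' | h'
    · refine ih ?_ q h'
      rw [Finset.sum_range_succ, hdN, map_zero, zero_mul, add_zero] at h
      exact h
    · rw [h']; exact hdN

open Polynomial in
lemma inversion (n : ℕ) (α : ℕ → ℝ) (s S : ℕ → ℕ → ℝ)
    (hs : ∀ m ≤ n, ∀ x : ℝ,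
      ∏ i ∈ range m, (x - α i) = ∑ j ∈ range (m + 1), s m j * x ^ j)
    (hS : ∀ p ≤ n, ∀ x : ℝ,
      x ^ p = ∑ m ∈ range (p + 1), S p m * ∏ i ∈ range m, (x - α i)) :
    ∀ m ≤ n, ∀ p ≤ m,
      ∑ j ∈ Icc p m, s m j * S j p = if p = m then 1 else 0 := by
  intro m hm p hp
  set Q : ℕ → ℝ[X] := fun q => ∏ i ∈ range q, (X - Polynomial.C (α i)) with hQ
  have hQeval : ∀ q x, (Q q).eval x = ∏ i ∈ range q, (x - α i) := by
    intro q x; simp only [hQ, eval_prod, eval_sub, eval_X, eval_C]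
  have h1 : Q m = ∑ j ∈ range (m + 1), Polynomial.C (s m j) * X ^ j := by
    apply Polynomial.funext
    intro x
    simp only [hQeval, eval_finset_sum, eval_mul, eval_C, eval_pow, eval_X]
    exact hs m hm x
  have h2 : ∀ j ≤ m, (X : ℝ[X]) ^ j = ∑ q ∈ range (j + 1), Polynomial.C (S j q) * Q q := by
    intro j hj
    apply Polynomial.funext
    intro x
    simp only [hQeval, eval_finset_sum, eval_mul, eval_C, eval_pow, eval_X]
    exact hS j (hj.trans hm) x
  have h3 : Q m = ∑ q ∈ range (m + 1),
      Polynomial.C (∑ j ∈ Icc q m, s m j * S j q) * Q q := by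
    conv_lhs => rw [h1]
    rw [Finset.sum_congr rfl (fun j hj => by
      rw [h2 j (Nat.lt_succ_iff.mp (mem_range.mp hj)), Finset.mul_sum])]
    rw [swap_sum m (fun j q => Polynomial.C (s m j) * (Polynomial.C (S j q) * Q q))]
    refine Finset.sum_congr rfl (fun q _ => ?_)
    rw [map_sum, Finset.sum_mul]
    refine Finset.sum_congr rfl (fun j _ => ?_)
    rw [map_mul]; ring
  have h4 : Q m = ∑ q ∈ range (m + 1),
      Polynomial.C (if q = m then (1:ℝ) else 0) * Q q := by
    rw [Finset.sum_congr rfl (fun q _ => by rw [apply_ite Polynomial.C, map_one, map_zero])]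
    rw [Finset.sum_congr rfl (fun q _ => by
      show (if q = m then (1:ℝ[X]) else 0) * Q q = if q = m then Q m else 0
      split <;> simp_all)]
    rw [Finset.sum_ite_eq' (range (m+1)) m (fun _ => Q m)]
    simp
  have h5 : ∑ q ∈ range (m + 1),
      Polynomial.C ((∑ j ∈ Icc q m, s m j * S j q) - (if q = m then 1 else 0)) * Q q = 0 := by
    simp only [map_sub, sub_mul]
    rw [Finset.sum_sub_distrib, ← h3, ← h4, sub_self]
  have := indep α _ (m + 1) h5 p (Nat.lt_succ_of_le hp)
  linarith [this]

theorem stmt12 (n k : ℕ) (hk : 1 ≤ k) (α : ℕ → ℝ) (L : Fin k → ℝ)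
    (hL : ∀ i, L i ≠ 0) (s : ℕ → ℕ → ℝ) (S : ℕ → ℕ → ℝ)
    (hs : ∀ m ≤ n, ∀ x : ℝ,
      ∏ i ∈ range m, (x - α i) = ∑ j ∈ range (m + 1), s m j * x ^ j)
    (hS : ∀ p ≤ n, ∀ x : ℝ,
      x ^ p = ∑ m ∈ range (p + 1), S p m * ∏ i ∈ range m, (x - α i)) :
    iterInt (List.ofFn L) (fun t => ∏ i ∈ range n, (t - α i)) =
      ∑ j ∈ range (n + 1), ∑ m ∈ Icc j n,
        (-1 : ℝ) ^ (m - j) * (s m j * s n m / (m.factorial : ℝ)) *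
          (∑ p ∈ range (j + 1),
            (-1 : ℝ) ^ (j - p) * (p.factorial : ℝ) * S j p *
              (∏ i, L i) ^ (p + 1) / ((p : ℝ) + 1) ^ k) := by
  set P : ℝ := ∏ i, L i with hP
  -- LHS
  have hfun : (fun t : ℝ => ∏ i ∈ range n, (t - α i))
      = fun t => ∑ m ∈ range (n + 1), s n m * t ^ m := funext (hs n le_rfl)
  rw [hfun, iterInt_polysum (n + 1) (List.ofFn L) (fun m => s n m)]
  simp only [List.prod_ofFn, List.length_ofFn, ← hP]
  -- RHS : swap outer sums
  rw [← swap_sum n (fun m j => (-1 : ℝ) ^ (m - j) * (s m j * s n m / (m.factorial : ℝ)) *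
        (∑ p ∈ range (j + 1),
          (-1 : ℝ) ^ (j - p) * (p.factorial : ℝ) * S j p * P ^ (p + 1) / ((p : ℝ) + 1) ^ k))]
  refine Finset.sum_congr rfl (fun m hm => ?_)
  have hmn : m ≤ n := Nat.lt_succ_iff.mp (mem_range.mp hm)
  -- expand inner product over the p-sum
  simp only [Finset.mul_sum]
  rw [swap_sum m (fun j p => (-1 : ℝ) ^ (m - j) * (s m j * s n m / (m.factorial : ℝ)) *
        ((-1 : ℝ) ^ (j - p) * (p.factorial : ℝ) * S j p * P ^ (p + 1) / ((p : ℝ) + 1) ^ k))]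
  have key : ∀ p ∈ range (m + 1),
      (∑ j ∈ Icc p m, (-1 : ℝ) ^ (m - j) * (s m j * s n m / (m.factorial : ℝ)) *
        ((-1 : ℝ) ^ (j - p) * (p.factorial : ℝ) * S j p * P ^ (p + 1) / ((p : ℝ) + 1) ^ k))
      = if p = m then s n m * P ^ (m + 1) / ((m : ℝ) + 1) ^ k else 0 := by
    intro p hp
    have hpm : p ≤ m := Nat.lt_succ_iff.mp (mem_range.mp hp)
    have step : ∀ j ∈ Icc p m,
        (-1 : ℝ) ^ (m - j) * (s m j * s n m / (m.factorial : ℝ)) *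
          ((-1 : ℝ) ^ (j - p) * (p.factorial : ℝ) * S j p * P ^ (p + 1) / ((p : ℝ) + 1) ^ k)
        = ((-1 : ℝ) ^ (m - p) * (s n m / (m.factorial : ℝ)) * (p.factorial : ℝ)
            * P ^ (p + 1) / ((p : ℝ) + 1) ^ k) * (s m j * S j p) := by
      intro j hj
      have hj' := mem_Icc.mp hj
      have hsign : (-1 : ℝ) ^ (m - j) * (-1 : ℝ) ^ (j - p) = (-1 : ℝ) ^ (m - p) := by
        rw [← pow_add]; congr 1; omega
      rw [← hsign]; ring
    rw [Finset.sum_congr rfl step, ← Finset.mul_sum,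
      inversion n α s S hs hS m hmn p hpm]
    split
    · next h =>
      subst h
      have hfac : ((p.factorial : ℝ)) ≠ 0 := by positivity
      simp only [Nat.sub_self, pow_zero, mul_one]
      field_simp
    · rw [mul_zero]
  rw [Finset.sum_congr rfl key, Finset.sum_ite_eq' (range (m + 1)) m
      (fun _ => s n m * P ^ (m + 1) / ((m : ℝ) + 1) ^ k)]
  simp
end

section
/- For all integers n ≥ 0 and k ≥ 1, every sequence of real numbers ᾱ = (α₀, α₁, …, α_{n−1}) and all nonzero real numbers ℓ₁, …, ℓ_k, the multiparameter poly-Bernoulli numbers are expressed through the multiparameter poly-Cauchy numbers of the first kind by B_{n,ᾱ,L}^{(k)} = Σ_{j=0}^{n} Σ_{m=j}^{n} (−1)^{n−m} m! S_ᾱ(n,m) S_ᾱ(m,j) C_{j,L}^{(k)}(ᾱ). -/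
open Finset

lemma iterInt_const_mul (l : List ℝ) (c : ℝ) (f : ℝ → ℝ) :
    iterInt l (fun t => c * f t) = c * iterInt l f := by
  induction l generalizing f with
  | nil => simp [iterInt]
  | cons a ls ih =>
    simp only [iterInt]
    rw [← intervalIntegral.integral_const_mul]
    congr 1; ext x; exact ih (fun y => f (x * y))

lemma iterInt_cons_pow (a : ℝ) (ls : List ℝ) (m : ℕ) :
    iterInt (a :: ls) (fun t => t ^ m)
      = ∫ x in (0:ℝ)..a, x ^ m * iterInt ls (fun t => t ^ m) := by
  simp only [iterInt]
  congr 1; ext x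
  simpa [mul_pow] using iterInt_const_mul ls (x ^ m) (fun t => t ^ m)

lemma iterInt_pow (l : List ℝ) (m : ℕ) :
    iterInt l (fun t => t ^ m) = l.prod ^ (m + 1) / ((m : ℝ) + 1) ^ l.length := by
  induction l with
  | nil => simp [iterInt]
  | cons a ls ih =>
    rw [iterInt_cons_pow, intervalIntegral.integral_mul_const, integral_pow, ih]
    rw [zero_pow (Nat.succ_ne_zero m), sub_zero, div_mul_div_comm, ← mul_pow]
    simp [List.prod_cons, List.length_cons, pow_succ']

lemma iterInt_sum_pow (l : List ℝ) (N : ℕ) (c : ℕ → ℝ) :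
    iterInt l (fun t => ∑ m ∈ range N, c m * t ^ m)
      = ∑ m ∈ range N, c m * iterInt l (fun t => t ^ m) := by
  induction l generalizing c with
  | nil => simp [iterInt]
  | cons a ls ih =>
    have h1 : ∀ x : ℝ, iterInt ls (fun y => ∑ m ∈ range N, c m * (x * y) ^ m)
        = ∑ m ∈ range N, c m * x ^ m * iterInt ls (fun t => t ^ m) := by
      intro x
      have := ih (fun m => c m * x ^ m)
      rw [← this]
      congr 1; ext y
      exact Finset.sum_congr rfl fun m _ => by ring
    show (∫ x in (0:ℝ)..a, iterInt ls (fun y => ∑ m ∈ range N, c m * ((x * y) ^ m))) = _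
    simp only [h1]
    rw [intervalIntegral.integral_finset_sum]
    · refine Finset.sum_congr rfl fun m _ => ?_
      rw [iterInt_cons_pow]
      rw [← intervalIntegral.integral_const_mul]
      congr 1; ext x; ring
    · intro m _
      exact (Continuous.intervalIntegrable (by continuity) _ _)

theorem stmt13 (n k : ℕ) (hk : 1 ≤ k) (α : ℕ → ℝ) (L : Fin k → ℝ)
    (hL : ∀ i, L i ≠ 0) (S : ℕ → ℕ → ℝ)
    (hS : ∀ p ≤ n, ∀ x : ℝ,
      x ^ p = ∑ m ∈ range (p + 1), S p m * ∏ i ∈ range m, (x - α i)) :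
    ∑ m ∈ range (n + 1),
        (-1 : ℝ) ^ (n - m) * (m.factorial : ℝ) * S n m *
          (∏ i, L i) ^ (m + 1) / ((m : ℝ) + 1) ^ k =
      ∑ j ∈ range (n + 1), ∑ m ∈ Icc j n,
        (-1 : ℝ) ^ (n - m) * (m.factorial : ℝ) * S n m * S m j *
          iterInt (List.ofFn L) (fun t => ∏ i ∈ range j, (t - α i)) := by
  classical
  set P : ℕ → Polynomial ℝ := fun j => ∏ i ∈ range j, (Polynomial.X - Polynomial.C (α i))
    with hP
  set M : ℕ → ℝ := fun m => (∏ i, L i) ^ (m + 1) / ((m : ℝ) + 1) ^ k with hM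
  have hdeg : ∀ j, (P j).natDegree ≤ j := by
    intro j
    have h1 := Polynomial.natDegree_prod_le (range j)
      (fun i => Polynomial.X - Polynomial.C (α i))
    simp only [Polynomial.natDegree_X_sub_C, Finset.sum_const, Finset.card_range, smul_eq_mul,
      mul_one] at h1
    exact h1
  have heval : ∀ j (t : ℝ), (P j).eval t = ∏ i ∈ range j, (t - α i) := by
    intro j t
    simp [hP, Polynomial.eval_prod]
  have hiter : ∀ j ≤ n,
      iterInt (List.ofFn L) (fun t => ∏ i ∈ range j, (t - α i))
        = ∑ m' ∈ range (n + 1), (P j).coeff m' * M m' := by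
    intro j hj
    have hfun : (fun t : ℝ => ∏ i ∈ range j, (t - α i))
        = fun t => ∑ m' ∈ range (n + 1), (P j).coeff m' * t ^ m' := by
      ext t
      rw [← heval, Polynomial.eval_eq_sum_range' (lt_of_le_of_lt (hdeg j) (Nat.lt_succ_of_le hj))]
    rw [hfun, iterInt_sum_pow]
    refine Finset.sum_congr rfl fun m' _ => ?_
    rw [iterInt_pow]
    simp [hM, List.prod_ofFn]
  have hcoeff : ∀ m ≤ n, ∀ m' : ℕ,
      ∑ j ∈ range (m + 1), S m j * (P j).coeff m' = if m' = m then 1 else 0 := by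
    intro m hm m'
    have hQ : (∑ j ∈ range (m + 1), Polynomial.C (S m j) * P j) = Polynomial.X ^ m := by
      apply Polynomial.funext
      intro x
      simp only [Polynomial.eval_finset_sum, Polynomial.eval_mul, Polynomial.eval_C,
        Polynomial.eval_pow, Polynomial.eval_X, heval]
      exact (hS m hm x).symm
    have := congrArg (fun p => Polynomial.coeff p m') hQ
    simpa [Polynomial.finset_sum_coeff, Polynomial.coeff_C_mul, Polynomial.coeff_X_pow]
      using this
  have hswap :
      (∑ j ∈ range (n + 1), ∑ m ∈ Icc j n,
        (-1 : ℝ) ^ (n - m) * (m.factorial : ℝ) * S n m * S m j *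
          iterInt (List.ofFn L) (fun t => ∏ i ∈ range j, (t - α i)))
      = ∑ m ∈ range (n + 1), ∑ j ∈ range (m + 1),
        (-1 : ℝ) ^ (n - m) * (m.factorial : ℝ) * S n m * S m j *
          iterInt (List.ofFn L) (fun t => ∏ i ∈ range j, (t - α i)) := by
    apply Finset.sum_comm'
    intro j m
    simp only [Finset.mem_range, Finset.mem_Icc, Nat.lt_succ_iff]
    omega
  rw [hswap]
  refine Finset.sum_congr rfl fun m hm => ?_
  rw [Finset.mem_range, Nat.lt_succ_iff] at hm
  have key : ∀ j ∈ range (m + 1),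
      (-1 : ℝ) ^ (n - m) * (m.factorial : ℝ) * S n m * S m j *
          iterInt (List.ofFn L) (fun t => ∏ i ∈ range j, (t - α i))
      = ∑ m' ∈ range (n + 1),
          (S m j * (P j).coeff m') *
            ((-1 : ℝ) ^ (n - m) * (m.factorial : ℝ) * S n m * M m') := by
    intro j hj
    rw [Finset.mem_range, Nat.lt_succ_iff] at hj
    rw [hiter j (le_trans hj hm), Finset.mul_sum]
    exact Finset.sum_congr rfl fun m' _ => by ring
  rw [Finset.sum_congr rfl key, Finset.sum_comm]
  simp only [← Finset.sum_mul]
  rw [Finset.sum_congr rfl fun m' _ => by rw [hcoeff m hm m']]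
  simp only [ite_mul, one_mul, zero_mul, Finset.sum_ite_eq', Finset.mem_range,
    Nat.lt_succ_iff, hm, if_true, hM]
  rw [mul_div_assoc]
end

section
/- For all integers n ≥ 0 and k ≥ 1, every sequence of real numbers ᾱ = (α₀, α₁, …, α_{n−1}), all nonzero real numbers ℓ₁, …, ℓ_k, and every real number z, the multiparameter poly-Cauchy polynomials of the first kind are expressed through the multiparameter poly-Bernoulli polynomials by C_{n,L}^{(k)}(z;ᾱ) = Σ_{j=0}^{n} Σ_{m=j}^{n} (−1)^{m−j} (s_ᾱ(m,j) s_ᾱ(n,m) / m!) B_{j,ᾱ,L}^{(k)}(z). -/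
open Finset

lemma swap_tri (N : ℕ) (f : ℕ → ℕ → ℝ) :
    ∑ m ∈ range (N+1), ∑ j ∈ range (m+1), f m j
      = ∑ j ∈ range (N+1), ∑ m ∈ Icc j N, f m j :=
  Finset.sum_comm' (by intro m j; simp only [mem_range, mem_Icc]; omega)

lemma coeff_zero' {N : ℕ} {c : ℕ → ℝ} (h : ∀ x : ℝ, ∑ j ∈ range N, c j * x ^ j = 0) :
    ∀ j < N, c j = 0 := by
  intro j hj
  have hq : (∑ j ∈ range N, Polynomial.C (c j) * Polynomial.X ^ j : Polynomial ℝ) = 0 := by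
    apply Polynomial.funext
    intro r
    simp only [Polynomial.eval_finset_sum, Polynomial.eval_mul, Polynomial.eval_C,
      Polynomial.eval_pow, Polynomial.eval_X, Polynomial.eval_zero]
    exact h r
  have := congrArg (fun p => Polynomial.coeff p j) hq
  simp only [Polynomial.finset_sum_coeff, Polynomial.coeff_C_mul, Polynomial.coeff_X_pow,
    Polynomial.coeff_zero, mul_ite, mul_one, mul_zero] at this
  simpa [hj] using this


theorem stmt18 (n k : ℕ) (hk : 1 ≤ k) (α : ℕ → ℝ) (L : Fin k → ℝ)
    (hL : ∀ i, L i ≠ 0) (z : ℝ) (s : ℕ → ℕ → ℝ) (S : ℕ → ℕ → ℝ)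
    (hs : ∀ m ≤ n, ∀ x : ℝ,
      ∏ i ∈ range m, (x - α i) = ∑ j ∈ range (m + 1), s m j * x ^ j)
    (hS : ∀ p ≤ n, ∀ x : ℝ,
      x ^ p = ∑ m ∈ range (p + 1), S p m * ∏ i ∈ range m, (x - α i)) :
    iterInt (List.ofFn L) (fun t => ∏ i ∈ range n, (t - α i - z)) =
      ∑ j ∈ range (n + 1), ∑ m ∈ Icc j n,
        (-1 : ℝ) ^ (m - j) * (s m j * s n m / (m.factorial : ℝ)) *
          ((-1 : ℝ) ^ j * ∑ i ∈ range (j + 1), ∑ p ∈ Icc i j,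
            (-1 : ℝ) ^ p * (p.factorial : ℝ) * (p.choose i : ℝ) * S j p *
              (∏ q, L q) ^ (p - i + 1) / (((p - i : ℕ) : ℝ) + 1) ^ k * (-z) ^ i) := by
  have iterInt_sum : ∀ (ls : List ℝ) (N : ℕ) (c : ℕ → ℝ),
      iterInt ls (fun t => ∑ m ∈ range N, c m * t ^ m)
        = ∑ m ∈ range N, c m * ls.prod ^ (m+1) / ((m:ℝ)+1) ^ ls.length := by
    intro ls
    induction ls with
    | nil => intro N c; simp [iterInt]
    | cons l ls ih =>
      intro N c
      show (∫ x in (0:ℝ)..l, iterInt ls (fun y => ∑ m ∈ range N, c m * (x * y) ^ m)) = _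
      have h1 : ∀ x : ℝ, iterInt ls (fun y => ∑ m ∈ range N, c m * (x * y) ^ m)
          = ∑ m ∈ range N, c m * x ^ m * ls.prod ^ (m+1) / ((m:ℝ)+1) ^ ls.length := by
        intro x
        have := ih N (fun m => c m * x ^ m)
        rw [← this]
        congr 1
        funext y
        refine Finset.sum_congr rfl fun m _ => by ring
      simp_rw [h1]
      rw [intervalIntegral.integral_finset_sum (fun m _ => by
        apply Continuous.intervalIntegrable; fun_prop)]
      refine Finset.sum_congr rfl fun m _ => ?_
      have h2 : (∫ x in (0:ℝ)..l, c m * x ^ m * ls.prod ^ (m+1) / ((m:ℝ)+1) ^ ls.length)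
          = (∫ x in (0:ℝ)..l, x ^ m) * (c m * ls.prod ^ (m+1) / ((m:ℝ)+1) ^ ls.length) := by
        rw [← intervalIntegral.integral_mul_const]
        refine intervalIntegral.integral_congr fun x _ => by ring
      rw [h2, integral_pow]
      have hm : ((m:ℝ)+1) ≠ 0 := by positivity
      simp only [List.prod_cons, List.length_cons]
      field_simp
      ring
  have ortho : ∀ {p m : ℕ}, p ≤ m → m ≤ n →
      (∑ j ∈ Icc p m, s m j * S j p) = if m = p then 1 else 0 := by
    intro p m hpm hmn
    -- the matrices
    set mA : Matrix (Fin (n+1)) (Fin (n+1)) ℝ :=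
      fun a b => if (b:ℕ) ≤ (a:ℕ) then S a b else 0 with hmA
    set mB : Matrix (Fin (n+1)) (Fin (n+1)) ℝ :=
      fun a b => if (b:ℕ) ≤ (a:ℕ) then s a b else 0 with hmB
    -- key polynomial identity
    have key : ∀ pp ≤ n, ∀ x : ℝ,
        ∑ j ∈ range (n+1),
          (∑ mm ∈ range (n+1), (if mm ≤ pp then S pp mm else 0) *
            (if j ≤ mm then s mm j else 0)) * x ^ j = x ^ pp := by
      intro pp hpp x
      have e1 : ∀ j ∈ range (n+1),
          (∑ mm ∈ range (n+1), (if mm ≤ pp then S pp mm else 0) *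
            (if j ≤ mm then s mm j else 0)) * x ^ j
          = ∑ mm ∈ range (n+1), (if mm ≤ pp then S pp mm else 0) *
              ((if j ≤ mm then s mm j else 0) * x ^ j) := by
        intro j _
        rw [Finset.sum_mul]
        exact Finset.sum_congr rfl fun mm _ => by ring
      rw [Finset.sum_congr rfl e1, Finset.sum_comm]
      have e2 : ∀ mm ∈ range (n+1),
          (∑ j ∈ range (n+1), (if mm ≤ pp then S pp mm else 0) *
            ((if j ≤ mm then s mm j else 0) * x ^ j))
          = (if mm ≤ pp then S pp mm else 0) * ∏ i ∈ range mm, (x - α i) := by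
        intro mm hmm
        rw [← Finset.mul_sum]
        congr 1
        have hmm' : mm < n + 1 := by simpa using hmm
        have sub : range (mm+1) ⊆ range (n+1) :=
          Finset.range_subset_range.mpr (by omega)
        rw [← Finset.sum_subset sub (fun j _ hj => by
          rw [if_neg (by simp at hj ⊢; omega), zero_mul])]
        rw [hs mm (by omega) x]
        exact Finset.sum_congr rfl fun j hj => by
          rw [if_pos (by simp at hj; omega)]
      rw [Finset.sum_congr rfl e2]
      have sub : range (pp+1) ⊆ range (n+1) := Finset.range_subset_range.mpr (by omega)
      rw [← Finset.sum_subset sub (fun mm _ hmm => by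
        rw [if_neg (by simp at hmm ⊢; omega), zero_mul])]
      rw [hS pp hpp x]
      exact Finset.sum_congr rfl fun mm hmm => by
        rw [if_pos (by simp at hmm; omega)]
    -- mA * mB = 1
    have hAB : mA * mB = 1 := by
      ext a b
      rw [Matrix.mul_apply, Matrix.one_apply]
      have hsum : ∑ mm : Fin (n+1), mA a mm * mB mm b
          = ∑ mm ∈ range (n+1), (if mm ≤ (a:ℕ) then S a mm else 0) *
              (if (b:ℕ) ≤ mm then s mm b else 0) := by
        rw [← Fin.sum_univ_eq_sum_range
          (fun mm => (if mm ≤ (a:ℕ) then S a mm else 0) * (if (b:ℕ) ≤ mm then s mm b else 0))]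
      rw [hsum]
      have hcz : ∀ j < n+1,
          ((∑ mm ∈ range (n+1), (if mm ≤ (a:ℕ) then S a mm else 0) *
            (if j ≤ mm then s mm j else 0)) - (if j = (a:ℕ) then 1 else 0)) = 0 := by
        apply coeff_zero'
        intro x
        have expand : ∑ j ∈ range (n+1),
            ((∑ mm ∈ range (n+1), (if mm ≤ (a:ℕ) then S a mm else 0) *
              (if j ≤ mm then s mm j else 0)) - (if j = (a:ℕ) then 1 else 0)) * x ^ j
            = (∑ j ∈ range (n+1),
                (∑ mm ∈ range (n+1), (if mm ≤ (a:ℕ) then S a mm else 0) *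
                  (if j ≤ mm then s mm j else 0)) * x ^ j)
              - ∑ j ∈ range (n+1), (if j = (a:ℕ) then 1 else 0) * x ^ j := by
          rw [← Finset.sum_sub_distrib]
          exact Finset.sum_congr rfl fun j _ => by ring
        rw [expand, key a a.is_le x]
        have : ∑ j ∈ range (n+1), (if j = (a:ℕ) then (1:ℝ) else 0) * x ^ j = x ^ (a:ℕ) := by
          simp [Finset.sum_ite_eq]
          intro h
          have := a.is_lt
          omega
        rw [this, sub_self]
      have := hcz b b.is_lt
      rw [sub_eq_zero] at this
      rw [this]
      simp [Fin.val_eq_val, eq_comm]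
    -- mB * mA = 1
    have hBA : mB * mA = 1 := mul_eq_one_comm.mp hAB
    have hm' : m < n + 1 := by omega
    have hp' : p < n + 1 := by omega
    have := congrFun (congrFun hBA ⟨m, hm'⟩) ⟨p, hp'⟩
    rw [Matrix.mul_apply, Matrix.one_apply] at this
    have hsum : ∑ j : Fin (n+1), mB ⟨m, hm'⟩ j * mA j ⟨p, hp'⟩
        = ∑ j ∈ range (n+1), (if j ≤ m then s m j else 0) * (if p ≤ j then S j p else 0) := by
      rw [← Fin.sum_univ_eq_sum_range
        (fun j => (if j ≤ m then s m j else 0) * (if p ≤ j then S j p else 0))]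
    rw [hsum] at this
    have hicc : ∑ j ∈ range (n+1), (if j ≤ m then s m j else 0) * (if p ≤ j then S j p else 0)
        = ∑ j ∈ Icc p m, s m j * S j p := by
      rw [← Finset.sum_subset (show Icc p m ⊆ range (n+1) by
        intro j hj; simp at hj ⊢; omega) (fun j _ hj => by
          simp only [mem_Icc, not_and_or, not_le] at hj
          rcases hj with h | h
          · rw [if_neg (show ¬ p ≤ j by omega), mul_zero]
          · rw [if_neg (show ¬ j ≤ m by omega), zero_mul])]
      exact Finset.sum_congr rfl fun j hj => by
        simp only [mem_Icc] at hj
        rw [if_pos hj.2, if_pos hj.1]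
    rw [hicc] at this
    rw [this]
    simp [Fin.mk.injEq]
  set P : ℝ := ∏ q, L q with hP
  set c : ℕ → ℝ := fun j => ∑ m ∈ Icc j n, s n m * (m.choose j : ℝ) * (-z) ^ (m - j) with hc
  set T : ℕ → ℝ := fun p => ∑ i ∈ range (p+1),
      (p.choose i : ℝ) * P ^ (p - i + 1) / (((p - i : ℕ) : ℝ) + 1) ^ k * (-z) ^ i with hT
  have hfun : (fun t : ℝ => ∏ i ∈ range n, (t - α i - z))
      = fun t => ∑ j ∈ range (n+1), c j * t ^ j := by
    funext t
    have h0 : ∏ i ∈ range n, (t - α i - z) = ∏ i ∈ range n, ((t - z) - α i) :=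
      Finset.prod_congr rfl fun i _ => by ring
    rw [h0, hs n le_rfl (t - z)]
    have h1 : ∀ m ∈ range (n+1), s n m * (t - z) ^ m
        = ∑ j ∈ range (m+1), s n m * (m.choose j : ℝ) * (-z) ^ (m - j) * t ^ j := by
      intro m _
      rw [show t - z = t + (-z) by ring, add_pow, Finset.mul_sum]
      exact Finset.sum_congr rfl fun j _ => by ring
    rw [Finset.sum_congr rfl h1, swap_tri]
    refine Finset.sum_congr rfl fun j _ => ?_
    rw [hc, ← Finset.sum_mul]
  rw [hfun, iterInt_sum]
  have hprod : (List.ofFn L).prod = P := by rw [List.prod_ofFn]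
  have hlen : (List.ofFn L).length = k := List.length_ofFn
  rw [hprod, hlen]
  -- now transform the RHS
  symm
  have hD : ∀ j ≤ n,
      (∑ i ∈ range (j + 1), ∑ p ∈ Icc i j,
        (-1 : ℝ) ^ p * (p.factorial : ℝ) * (p.choose i : ℝ) * S j p *
          P ^ (p - i + 1) / (((p - i : ℕ) : ℝ) + 1) ^ k * (-z) ^ i)
      = ∑ p ∈ range (j+1), (-1:ℝ)^p * (p.factorial : ℝ) * S j p * T p := by
    intro j _
    rw [← swap_tri j (fun p i => (-1 : ℝ) ^ p * (p.factorial : ℝ) * (p.choose i : ℝ) * S j p *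
          P ^ (p - i + 1) / (((p - i : ℕ) : ℝ) + 1) ^ k * (-z) ^ i)]
    refine Finset.sum_congr rfl fun p _ => ?_
    rw [hT]
    rw [Finset.mul_sum]
    exact Finset.sum_congr rfl fun i _ => by ring
  calc
    ∑ j ∈ range (n + 1), ∑ m ∈ Icc j n,
        (-1 : ℝ) ^ (m - j) * (s m j * s n m / (m.factorial : ℝ)) *
          ((-1 : ℝ) ^ j * ∑ i ∈ range (j + 1), ∑ p ∈ Icc i j,
            (-1 : ℝ) ^ p * (p.factorial : ℝ) * (p.choose i : ℝ) * S j p *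
              P ^ (p - i + 1) / (((p - i : ℕ) : ℝ) + 1) ^ k * (-z) ^ i)
      = ∑ m ∈ range (n + 1), ∑ j ∈ range (m + 1),
          (-1 : ℝ) ^ (m - j) * (s m j * s n m / (m.factorial : ℝ)) *
          ((-1 : ℝ) ^ j * ∑ i ∈ range (j + 1), ∑ p ∈ Icc i j,
            (-1 : ℝ) ^ p * (p.factorial : ℝ) * (p.choose i : ℝ) * S j p *
              P ^ (p - i + 1) / (((p - i : ℕ) : ℝ) + 1) ^ k * (-z) ^ i) := by
        rw [swap_tri]
    _ = ∑ m ∈ range (n + 1), ∑ j ∈ range (m + 1),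
          ((-1:ℝ)^m * s n m / (m.factorial : ℝ)) *
            (s m j * ∑ p ∈ range (j+1), (-1:ℝ)^p * (p.factorial : ℝ) * S j p * T p) := by
        refine Finset.sum_congr rfl fun m hm => Finset.sum_congr rfl fun j hj => ?_
        simp only [mem_range] at hm hj
        rw [hD j (by omega)]
        have hsg : (-1:ℝ)^(m-j) * (-1:ℝ)^j = (-1:ℝ)^m := by
          rw [← pow_add]; congr 1; omega
        calc (-1 : ℝ) ^ (m - j) * (s m j * s n m / (m.factorial : ℝ)) *
              ((-1 : ℝ) ^ j * ∑ p ∈ range (j+1), (-1:ℝ)^p * (p.factorial : ℝ) * S j p * T p)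
            = ((-1:ℝ)^(m-j) * (-1:ℝ)^j) * (s m j * s n m / (m.factorial : ℝ)) *
              (∑ p ∈ range (j+1), (-1:ℝ)^p * (p.factorial : ℝ) * S j p * T p) := by ring
          _ = _ := by rw [hsg]; ring
    _ = ∑ m ∈ range (n + 1),
          ((-1:ℝ)^m * s n m / (m.factorial : ℝ)) * ((-1:ℝ)^m * (m.factorial : ℝ) * T m) := by
        refine Finset.sum_congr rfl fun m hm => ?_
        simp only [mem_range] at hm
        rw [← Finset.mul_sum]
        congr 1
        have e1 : ∀ j ∈ range (m+1),
            s m j * ∑ p ∈ range (j+1), (-1:ℝ)^p * (p.factorial : ℝ) * S j p * T p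
            = ∑ p ∈ range (j+1), s m j * ((-1:ℝ)^p * (p.factorial : ℝ) * S j p * T p) :=
          fun j _ => Finset.mul_sum _ _ _
        rw [Finset.sum_congr rfl e1,
          swap_tri m (fun j p => s m j * ((-1:ℝ)^p * (p.factorial : ℝ) * S j p * T p))]
        have e2 : ∀ p ∈ range (m+1),
            (∑ j ∈ Icc p m, s m j * ((-1:ℝ)^p * (p.factorial : ℝ) * S j p * T p))
            = ((-1:ℝ)^p * (p.factorial : ℝ) * T p) * (if m = p then 1 else 0) := by
          intro p hp
          simp only [mem_range] at hp
          rw [← ortho (by omega) (by omega), Finset.mul_sum]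
          exact Finset.sum_congr rfl fun j _ => by ring
        rw [Finset.sum_congr rfl e2]
        simp only [mul_ite, mul_one, mul_zero]
        rw [Finset.sum_ite_eq (range (m+1)) m
          (fun p => (-1:ℝ)^p * (p.factorial : ℝ) * T p), if_pos (self_mem_range_succ m)]
    _ = ∑ m ∈ range (n + 1), s n m * T m := by
        refine Finset.sum_congr rfl fun m hm => ?_
        have h1 : ((-1:ℝ)^m) * ((-1:ℝ)^m) = 1 := by
          rw [← pow_add, ← two_mul, pow_mul]; norm_num
        have h2 : ((m.factorial : ℝ)) ≠ 0 := Nat.cast_ne_zero.mpr m.factorial_ne_zero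
        calc ((-1:ℝ)^m * s n m / (m.factorial : ℝ)) * ((-1:ℝ)^m * (m.factorial : ℝ) * T m)
            = ((-1:ℝ)^m * (-1:ℝ)^m) * (s n m * T m) * ((m.factorial : ℝ) / (m.factorial : ℝ)) := by
              ring
          _ = s n m * T m := by rw [h1, div_self h2]; ring
    _ = ∑ m ∈ range (n + 1), ∑ j ∈ range (m+1),
          (s n m * (m.choose j : ℝ) * (-z) ^ (m - j)) * (P ^ (j+1) / ((j:ℝ)+1) ^ k) := by
        refine Finset.sum_congr rfl fun m hm => ?_
        simp only [hT]
        rw [← Finset.sum_range_reflect (fun i => (m.choose i : ℝ) * P ^ (m - i + 1) /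
            (((m - i : ℕ) : ℝ) + 1) ^ k * (-z) ^ i) (m+1), Finset.mul_sum]
        refine Finset.sum_congr rfl fun j hj => ?_
        simp only [mem_range] at hj
        have e1 : m + 1 - 1 - j = m - j := by omega
        rw [e1, Nat.choose_symm (by omega), Nat.sub_sub_self (by omega)]
        ring
    _ = ∑ j ∈ range (n + 1), ∑ m ∈ Icc j n,
          (s n m * (m.choose j : ℝ) * (-z) ^ (m - j)) * (P ^ (j+1) / ((j:ℝ)+1) ^ k) := by
        rw [swap_tri]
    _ = ∑ j ∈ range (n + 1), c j * P ^ (j + 1) / ((j:ℝ)+1) ^ k := by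
        refine Finset.sum_congr rfl fun j hj => ?_
        rw [hc, ← Finset.sum_mul, mul_div_assoc]
end
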